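/- arXiv:2305.18268 — 2 statements merged into one kernel-verified Lean document; each statement's English description precedes it below -/
import Mathlib

section
/- Let P and Q be irreducible and reversible with respect to π, with eigenvalues 1 = λ_1 ≥ λ_2 ≥ … ≥ λ_n for P and 1 = β_1 ≥ β_2 ≥ … ≥ β_n for Q. If λ_2 ≤ β_n (i.e., every non-trivial eigenvalue of P is at most every non-trivial eigenvalue of Q), then P efficiency-dominates Q. -/
open Matrix BigOperators Filter

def IsStochastic {n : ℕ} (P : Matrix (Fin n) (Fin n) ℝ) : Prop :=
  (∀ x y, 0 ≤ P x y) ∧ ∀ x, ∑ y, P x y = 1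

def IsReversible {n : ℕ} (π : Fin n → ℝ) (P : Matrix (Fin n) (Fin n) ℝ) : Prop :=
  ∀ x y, π x * P x y = π y * P y x

def MatIrreducible {n : ℕ} (P : Matrix (Fin n) (Fin n) ℝ) : Prop :=
  ∀ x y, ∃ k : ℕ, 0 < (P ^ k) x y

noncomputable def pInner {n : ℕ} (π f g : Fin n → ℝ) : ℝ := ∑ x, f x * g x * π x

noncomputable def autocov {n : ℕ} (π : Fin n → ℝ) (P : Matrix (Fin n) (Fin n) ℝ)
    (f : Fin n → ℝ) (k : ℕ) : ℝ :=
  ∑ x, ∑ y, π x * (f x - ∑ z, π z * f z) * (P ^ k) x y * (f y - ∑ z, π z * f z)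

noncomputable def varN {n : ℕ} (π : Fin n → ℝ) (P : Matrix (Fin n) (Fin n) ℝ)
    (f : Fin n → ℝ) (N : ℕ) : ℝ :=
  ((N : ℝ))⁻¹ * ∑ i ∈ Finset.range N, ∑ j ∈ Finset.range N,
    autocov π P f (max i j - min i j)

def HasAsymptVar {n : ℕ} (π : Fin n → ℝ) (P : Matrix (Fin n) (Fin n) ℝ)
    (f : Fin n → ℝ) (v : ℝ) : Prop :=
  Tendsto (varN π P f) atTop (nhds v)

def EffDom {n : ℕ} (π : Fin n → ℝ) (P Q : Matrix (Fin n) (Fin n) ℝ) : Prop :=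
  ∀ (f : Fin n → ℝ) (vP vQ : ℝ),
    HasAsymptVar π P f vP → HasAsymptVar π Q f vQ → vP ≤ vQ

section Aux
open Finset Filter Matrix

noncomputable def Gker (l : ℝ) (N : ℕ) : ℝ :=
  (N : ℝ)⁻¹ * ∑ i ∈ Finset.range N, ∑ j ∈ Finset.range N, l ^ (max i j - min i j)

noncomputable def hval (l : ℝ) : ℝ := (1 + l) / (1 - l)

lemma Sker_eq (l : ℝ) (N : ℕ) :
    ∑ i ∈ Finset.range N, ∑ j ∈ Finset.range N, l ^ (max i j - min i j)
      = ∑ i ∈ Finset.range N, (1 + 2 * ∑ d ∈ Finset.range i, l ^ (d + 1)) := by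
  induction N with
  | zero => simp
  | succ N ih =>
    rw [Finset.sum_range_succ (fun i => ∑ j ∈ Finset.range (N+1), l ^ (max i j - min i j))]
    have h1 : ∀ i ∈ Finset.range N, ∑ j ∈ Finset.range (N+1), l ^ (max i j - min i j)
        = (∑ j ∈ Finset.range N, l ^ (max i j - min i j)) + l ^ (N - i) := by
      intro i hi
      have hiN : i ≤ N := le_of_lt (Finset.mem_range.mp hi)
      rw [Finset.sum_range_succ, max_eq_right hiN, min_eq_left hiN]
    rw [Finset.sum_congr rfl h1, Finset.sum_add_distrib, ih]
    have h2 : ∑ j ∈ Finset.range (N+1), l ^ (max N j - min N j)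
        = (∑ j ∈ Finset.range N, l ^ (N - j)) + 1 := by
      rw [Finset.sum_range_succ]
      simp only [max_self, min_self, Nat.sub_self, pow_zero]
      congr 1
      apply Finset.sum_congr rfl
      intro j hj
      have := Finset.mem_range.mp hj
      congr 1
      omega
    rw [h2, Finset.sum_range_succ (fun i => 1 + 2 * ∑ d ∈ Finset.range i, l ^ (d + 1))]
    have h3 : ∑ j ∈ Finset.range N, l ^ (N - j) = ∑ d ∈ Finset.range N, l ^ (d + 1) := by
      rw [← Finset.sum_range_reflect]
      apply Finset.sum_congr rfl
      intro j hj
      have := Finset.mem_range.mp hj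
      congr 1
      omega
    rw [h3]
    ring

lemma Gker_tendsto_of_abs_lt (l : ℝ) (hl : |l| < 1) :
    Tendsto (Gker l) atTop (nhds (hval l)) := by
  have hl1 : (1 : ℝ) - l ≠ 0 := by
    have := abs_lt.mp hl; intro h; linarith
  have hgeo : Tendsto (fun i : ℕ => ∑ d ∈ Finset.range i, l ^ d) atTop
      (nhds (1 - l)⁻¹) := (hasSum_geometric_of_abs_lt_one hl).tendsto_sum_nat
  have hu : Tendsto (fun i : ℕ => 1 + 2 * ∑ d ∈ Finset.range i, l ^ (d + 1)) atTop
      (nhds (hval l)) := by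
    have h2 : ∀ i : ℕ, (1 : ℝ) + 2 * ∑ d ∈ Finset.range i, l ^ (d + 1)
        = 1 + 2 * (l * ∑ d ∈ Finset.range i, l ^ d) := by
      intro i
      have : ∑ d ∈ Finset.range i, l ^ (d + 1) = l * ∑ d ∈ Finset.range i, l ^ d := by
        rw [Finset.mul_sum]
        exact Finset.sum_congr rfl fun d _ => by ring
      rw [this]
    simp only [h2]
    have : Tendsto (fun i : ℕ => 1 + 2 * (l * ∑ d ∈ Finset.range i, l ^ d)) atTop
        (nhds (1 + 2 * (l * (1 - l)⁻¹))) := by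
      exact (((hgeo.const_mul l).const_mul 2).const_add 1)
    convert this using 2
    rw [hval]
    field_simp
    ring
  have := hu.cesaro
  convert this using 2 with N
  rw [Gker, Sker_eq]

lemma Gker_neg_one_tendsto : Tendsto (Gker (-1)) atTop (nhds (hval (-1))) := by
  have hv : hval (-1) = 0 := by rw [hval]; norm_num
  rw [hv]
  have key : ∀ a b : ℕ, a ≤ b → ((-1:ℝ)) ^ (b - a) = (-1) ^ a * (-1) ^ b := by
    intro a b h
    have h1 : (-1:ℝ) ^ (b - a) * (-1) ^ a = (-1) ^ b := by
      rw [← pow_add, Nat.sub_add_cancel h]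
    have h2 : (-1:ℝ) ^ a * (-1) ^ a = 1 := by
      rw [← pow_add]; exact Even.neg_one_pow ⟨a, rfl⟩
    calc (-1:ℝ)^(b-a) = (-1)^(b-a) * ((-1)^a * (-1)^a) := by rw [h2, mul_one]
      _ = ((-1)^(b-a) * (-1)^a) * (-1)^a := by ring
      _ = (-1)^b * (-1)^a := by rw [h1]
      _ = (-1)^a * (-1)^b := by ring
  have hS : ∀ N, ∑ i ∈ Finset.range N, ∑ j ∈ Finset.range N, (-1:ℝ) ^ (max i j - min i j)
      = (∑ i ∈ Finset.range N, (-1:ℝ) ^ i) ^ 2 := by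
    intro N
    rw [sq, Finset.sum_mul_sum]
    apply Finset.sum_congr rfl
    intro i _
    apply Finset.sum_congr rfl
    intro j _
    rcases le_total i j with h | h
    · rw [max_eq_right h, min_eq_left h]; exact key i j h
    · rw [max_eq_left h, min_eq_right h, key j i h]; ring
  apply squeeze_zero (g := fun N : ℕ => (N : ℝ)⁻¹)
  · intro N
    rw [Gker, hS N]
    positivity
  · intro N
    rw [Gker, hS N, neg_one_geom_sum]
    have : ((if Even N then (0:ℝ) else 1)) ^ 2 ≤ 1 := by
      split <;> norm_num
    have hN : (0:ℝ) ≤ (N : ℝ)⁻¹ := by positivity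
    calc (N:ℝ)⁻¹ * (if Even N then (0:ℝ) else 1) ^ 2 ≤ (N:ℝ)⁻¹ * 1 :=
          mul_le_mul_of_nonneg_left this hN
      _ = (N:ℝ)⁻¹ := mul_one _
  · exact tendsto_inv_atTop_nhds_zero_nat

lemma Gker_tendsto {l : ℝ} (h1 : -1 ≤ l) (h2 : l < 1) :
    Tendsto (Gker l) atTop (nhds (hval l)) := by
  rcases eq_or_lt_of_le h1 with h | h
  · rw [← h]; exact Gker_neg_one_tendsto
  · exact Gker_tendsto_of_abs_lt l (abs_lt.mpr ⟨h, h2⟩)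

lemma Gker_one (N : ℕ) : Gker 1 N = N := by
  rw [Gker]
  simp only [one_pow, Finset.sum_const, Finset.card_range, nsmul_eq_mul, mul_one]
  rcases Nat.eq_zero_or_pos N with h | h
  · simp [h]
  · have hN : (N : ℝ) ≠ 0 := Nat.cast_ne_zero.mpr (by omega)
    field_simp

lemma hval_mono {a b : ℝ} (ha : -1 ≤ a) (hab : a ≤ b) (hb : b < 1) : hval a ≤ hval b := by
  rw [hval, hval, div_le_div_iff₀ (by linarith) (by linarith)]
  nlinarith

lemma hval_nonneg {b : ℝ} (hb1 : -1 ≤ b) (hb2 : b < 1) : 0 ≤ hval b :=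
  div_nonneg (by linarith) (by linarith)



noncomputable def ctr {n : ℕ} (π f : Fin n → ℝ) : Fin n → ℝ :=
  fun x => f x - ∑ z, π z * f z

section Chain
open Matrix
variable {n : ℕ} [NeZero n] {π : Fin n → ℝ} {P : Matrix (Fin n) (Fin n) ℝ}
  {v : Fin n → Fin n → ℝ} {lam : Fin n → ℝ}

lemma pInner_sum_right (π g : Fin n → ℝ) (F : Fin n → Fin n → ℝ) :
    pInner π g (fun x => ∑ t, F t x) = ∑ t, pInner π g (F t) := by
  simp only [pInner]
  rw [Finset.sum_comm]
  apply Finset.sum_congr rfl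
  intro x _
  rw [Finset.mul_sum, Finset.sum_mul]

lemma pInner_smul_right (π g w : Fin n → ℝ) (c : ℝ) :
    pInner π g (fun x => c * w x) = c * pInner π g w := by
  rw [pInner, pInner, Finset.mul_sum]
  exact Finset.sum_congr rfl fun x _ => by ring

lemma pInner_self_nonneg (hπpos : ∀ x, 0 < π x) (g : Fin n → ℝ) :
    0 ≤ pInner π g g :=
  Finset.sum_nonneg fun x _ => mul_nonneg (mul_self_nonneg _) (hπpos x).le

lemma expansion (hπpos : ∀ x, 0 < π x)
    (hortho : ∀ i j, pInner π (v i) (v j) = if i = j then 1 else 0)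
    (g : Fin n → ℝ) (x : Fin n) : g x = ∑ t, pInner π g (v t) * v t x := by
  classical
  set M : Matrix (Fin n) (Fin n) ℝ := Matrix.of (fun i x => v i x * Real.sqrt (π x)) with hM
  have hMMT : M * M.transpose = 1 := by
    ext i j
    rw [Matrix.mul_apply, Matrix.one_apply]
    have : ∑ x, M i x * M.transpose x j = pInner π (v i) (v j) := by
      rw [pInner]
      apply Finset.sum_congr rfl
      intro x _
      simp only [hM, Matrix.transpose_apply, Matrix.of_apply]
      have hs : Real.sqrt (π x) * Real.sqrt (π x) = π x := Real.mul_self_sqrt (hπpos x).le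
      calc v i x * Real.sqrt (π x) * (v j x * Real.sqrt (π x))
          = v i x * v j x * (Real.sqrt (π x) * Real.sqrt (π x)) := by ring
        _ = v i x * v j x * π x := by rw [hs]
    rw [this, hortho i j]
  have hTM : M.transpose * M = 1 := mul_eq_one_comm.mp hMMT
  set w : Fin n → ℝ := fun y => g y * Real.sqrt (π y) with hwdef
  have hw : M.transpose.mulVec (M.mulVec w) = w := by
    rw [Matrix.mulVec_mulVec, hTM, Matrix.one_mulVec]
  have hx := congrFun hw x
  simp only [Matrix.mulVec, dotProduct, Matrix.transpose_apply, hM, Matrix.of_apply,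
    hwdef] at hx
  have hin : ∀ t, ∑ y, v t y * Real.sqrt (π y) * (g y * Real.sqrt (π y)) = pInner π g (v t) := by
    intro t
    rw [pInner]
    apply Finset.sum_congr rfl
    intro y _
    have hs : Real.sqrt (π y) * Real.sqrt (π y) = π y := Real.mul_self_sqrt (hπpos y).le
    calc v t y * Real.sqrt (π y) * (g y * Real.sqrt (π y))
        = g y * v t y * (Real.sqrt (π y) * Real.sqrt (π y)) := by ring
      _ = g y * v t y * π y := by rw [hs]
  rw [Finset.sum_congr rfl (fun t _ => by rw [hin t])] at hx
  have hsx : Real.sqrt (π x) ≠ 0 := (Real.sqrt_pos.mpr (hπpos x)).ne'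
  apply mul_right_cancel₀ hsx
  rw [← hx, Finset.sum_mul]
  apply Finset.sum_congr rfl
  intro t _
  ring

lemma eig_pow (heig : ∀ i, P.mulVec (v i) = lam i • v i) (t : Fin n) (k : ℕ) :
    (P ^ k).mulVec (v t) = (lam t ^ k) • v t := by
  induction k with
  | zero => simp [Matrix.one_mulVec]
  | succ k ih =>
    rw [pow_succ', ← Matrix.mulVec_mulVec, ih, Matrix.mulVec_smul, heig, smul_smul, pow_succ]

lemma eig_abs_le (hP : IsStochastic P)
    (hortho : ∀ i j, pInner π (v i) (v j) = if i = j then 1 else 0)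
    (heig : ∀ i, P.mulVec (v i) = lam i • v i) (t : Fin n) : |lam t| ≤ 1 := by
  obtain ⟨x₀, -, hx₀⟩ := Finset.exists_max_image Finset.univ (fun x => |v t x|)
    Finset.univ_nonempty
  have hpos : 0 < |v t x₀| := by
    rcases (abs_nonneg (v t x₀)).lt_or_eq with h | h
    · exact h
    · exfalso
      have hz : ∀ x, v t x = 0 := by
        intro x
        have := hx₀ x (Finset.mem_univ x)
        rw [← h] at this
        exact abs_eq_zero.mp (le_antisymm this (abs_nonneg _))
      have h1 := hortho t t
      simp only [if_pos rfl, pInner] at h1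
      rw [Finset.sum_eq_zero (fun x _ => by rw [hz x]; ring)] at h1
      norm_num at h1
  have key : |lam t| * |v t x₀| ≤ 1 * |v t x₀| := by
    have h1 : (P.mulVec (v t)) x₀ = lam t * v t x₀ := by
      rw [heig t]; simp [Pi.smul_apply, smul_eq_mul]
    calc |lam t| * |v t x₀| = |lam t * v t x₀| := (abs_mul _ _).symm
      _ = |∑ y, P x₀ y * v t y| := by rw [← h1]; rfl
      _ ≤ ∑ y, |P x₀ y * v t y| := Finset.abs_sum_le_sum_abs _ _
      _ = ∑ y, P x₀ y * |v t y| := Finset.sum_congr rfl fun y _ => by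
            rw [abs_mul, abs_of_nonneg (hP.1 x₀ y)]
      _ ≤ ∑ y, P x₀ y * |v t x₀| := Finset.sum_le_sum fun y _ =>
            mul_le_mul_of_nonneg_left (hx₀ y (Finset.mem_univ y)) (hP.1 x₀ y)
      _ = (∑ y, P x₀ y) * |v t x₀| := (Finset.sum_mul _ _ _).symm
      _ = 1 * |v t x₀| := by rw [hP.2 x₀]
  exact le_of_mul_le_mul_right key hpos

end Chain



section Chain2
open Matrix
variable {n : ℕ} [NeZero n] {π : Fin n → ℝ} {P : Matrix (Fin n) (Fin n) ℝ}
  {v : Fin n → Fin n → ℝ} {lam : Fin n → ℝ}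

lemma autocov_pInner (f : Fin n → ℝ) (k : ℕ) :
    autocov π P f k = pInner π (ctr π f) ((P ^ k).mulVec (ctr π f)) := by
  rw [autocov, pInner]
  apply Finset.sum_congr rfl
  intro x _
  rw [Matrix.mulVec, dotProduct, Finset.mul_sum, Finset.sum_mul]
  apply Finset.sum_congr rfl
  intro y _
  simp only [ctr]
  ring

lemma mulVec_expand (hπpos : ∀ x, 0 < π x)
    (hortho : ∀ i j, pInner π (v i) (v j) = if i = j then 1 else 0)
    (A : Matrix (Fin n) (Fin n) ℝ) (g : Fin n → ℝ) :
    A.mulVec g = fun x => ∑ t, pInner π g (v t) * (A.mulVec (v t)) x := by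
  have hg : g = fun y => ∑ t, pInner π g (v t) * v t y :=
    funext fun y => expansion hπpos hortho g y
  funext x
  conv_lhs => rw [hg]
  rw [Matrix.mulVec, dotProduct]
  calc ∑ y, A x y * ∑ t, pInner π g (v t) * v t y
      = ∑ y, ∑ t, pInner π g (v t) * (A x y * v t y) := by
        apply Finset.sum_congr rfl; intro y _; rw [Finset.mul_sum]
        apply Finset.sum_congr rfl; intro t _; ring
    _ = ∑ t, ∑ y, pInner π g (v t) * (A x y * v t y) := Finset.sum_comm
    _ = ∑ t, pInner π g (v t) * (A.mulVec (v t)) x := by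
        apply Finset.sum_congr rfl; intro t _
        rw [Matrix.mulVec, dotProduct, Finset.mul_sum]

lemma autocov_eq (hπpos : ∀ x, 0 < π x)
    (hortho : ∀ i j, pInner π (v i) (v j) = if i = j then 1 else 0)
    (heig : ∀ i, P.mulVec (v i) = lam i • v i) (f : Fin n → ℝ) (k : ℕ) :
    autocov π P f k = ∑ t, (pInner π (ctr π f) (v t))^2 * lam t ^ k := by
  rw [autocov_pInner, mulVec_expand hπpos hortho (P^k) (ctr π f),
    pInner_sum_right π (ctr π f)
      (fun t x => pInner π (ctr π f) (v t) * ((P^k).mulVec (v t)) x)]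
  apply Finset.sum_congr rfl
  intro t _
  rw [eig_pow heig t k]
  have : (fun x => pInner π (ctr π f) (v t) * ((lam t ^ k) • v t) x)
       = fun x => (pInner π (ctr π f) (v t) * lam t ^ k) * v t x := by
    funext x; simp only [Pi.smul_apply, smul_eq_mul]; ring
  rw [this, pInner_smul_right]
  ring

lemma varN_eq (hπpos : ∀ x, 0 < π x)
    (hortho : ∀ i j, pInner π (v i) (v j) = if i = j then 1 else 0)
    (heig : ∀ i, P.mulVec (v i) = lam i • v i) (f : Fin n → ℝ) (N : ℕ) :
    varN π P f N = ∑ t, (pInner π (ctr π f) (v t))^2 * Gker (lam t) N := by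
  rw [varN]
  calc ((N:ℝ))⁻¹ * ∑ i ∈ Finset.range N, ∑ j ∈ Finset.range N,
        autocov π P f (max i j - min i j)
      = ((N:ℝ))⁻¹ * ∑ i ∈ Finset.range N, ∑ j ∈ Finset.range N,
          ∑ t, (pInner π (ctr π f) (v t))^2 * lam t ^ (max i j - min i j) := by
        congr 1
        apply Finset.sum_congr rfl; intro i _
        apply Finset.sum_congr rfl; intro j _
        exact autocov_eq hπpos hortho heig f _
    _ = ((N:ℝ))⁻¹ * ∑ t, ∑ i ∈ Finset.range N, ∑ j ∈ Finset.range N,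
          (pInner π (ctr π f) (v t))^2 * lam t ^ (max i j - min i j) := by
        congr 1
        calc ∑ i ∈ Finset.range N, ∑ j ∈ Finset.range N, ∑ t,
              (pInner π (ctr π f) (v t))^2 * lam t ^ (max i j - min i j)
            = ∑ i ∈ Finset.range N, ∑ t, ∑ j ∈ Finset.range N,
              (pInner π (ctr π f) (v t))^2 * lam t ^ (max i j - min i j) :=
              Finset.sum_congr rfl fun i _ => Finset.sum_comm
          _ = ∑ t, ∑ i ∈ Finset.range N, ∑ j ∈ Finset.range N,
              (pInner π (ctr π f) (v t))^2 * lam t ^ (max i j - min i j) :=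
              Finset.sum_comm
    _ = ∑ t, (pInner π (ctr π f) (v t))^2 * Gker (lam t) N := by
        rw [Finset.mul_sum]
        apply Finset.sum_congr rfl; intro t _
        rw [Gker]
        have : ∑ i ∈ Finset.range N, ∑ j ∈ Finset.range N,
            (pInner π (ctr π f) (v t))^2 * lam t ^ (max i j - min i j)
            = (pInner π (ctr π f) (v t))^2 * ∑ i ∈ Finset.range N, ∑ j ∈ Finset.range N,
              lam t ^ (max i j - min i j) := by
          rw [Finset.mul_sum]
          apply Finset.sum_congr rfl; intro i _
          rw [Finset.mul_sum]
        rw [this]; ring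

lemma parseval (hπpos : ∀ x, 0 < π x)
    (hortho : ∀ i j, pInner π (v i) (v j) = if i = j then 1 else 0) (f : Fin n → ℝ) :
    ∑ t, (pInner π (ctr π f) (v t))^2 = pInner π (ctr π f) (ctr π f) := by
  have hfb : ctr π f = fun x => ∑ t, pInner π (ctr π f) (v t) * v t x :=
    funext fun x => expansion hπpos hortho (ctr π f) x
  conv_rhs => rw [show pInner π (ctr π f) (ctr π f)
    = pInner π (ctr π f) (fun x => ∑ t, pInner π (ctr π f) (v t) * v t x) by rw [← hfb]]
  rw [pInner_sum_right π (ctr π f) (fun t x => pInner π (ctr π f) (v t) * v t x)]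
  apply Finset.sum_congr rfl
  intro t _
  rw [pInner_smul_right]
  ring

end Chain2

section Chain3
open Matrix Filter
variable {n : ℕ} [NeZero n] {π : Fin n → ℝ} {P : Matrix (Fin n) (Fin n) ℝ}
  {v : Fin n → Fin n → ℝ} {lam : Fin n → ℝ}

lemma chain_var (hπpos : ∀ x, 0 < π x) (hP : IsStochastic P)
    (hortho : ∀ i j, pInner π (v i) (v j) = if i = j then 1 else 0)
    (heig : ∀ i, P.mulVec (v i) = lam i • v i) (f : Fin n → ℝ) {w : ℝ}
    (hw : Tendsto (varN π P f) atTop (nhds w)) :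
    (∀ t, lam t = 1 → pInner π (ctr π f) (v t) = 0) ∧
    w = ∑ t, (pInner π (ctr π f) (v t))^2 * hval (lam t) := by
  classical
  have hbd : ∀ t, |lam t| ≤ 1 := eig_abs_le hP hortho heig
  have hsplit : ∀ N : ℕ, varN π P f N
      = (∑ t ∈ Finset.univ.filter (fun t => lam t = 1), (pInner π (ctr π f) (v t))^2) * N
      + ∑ t ∈ Finset.univ.filter (fun t => ¬ lam t = 1),
          (pInner π (ctr π f) (v t))^2 * Gker (lam t) N := by
    intro N
    rw [varN_eq hπpos hortho heig f N,
      ← Finset.sum_filter_add_sum_filter_not Finset.univ (fun t => lam t = 1)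
        (fun t => (pInner π (ctr π f) (v t))^2 * Gker (lam t) N)]
    congr 1
    rw [Finset.sum_mul]
    apply Finset.sum_congr rfl
    intro t ht
    rw [(Finset.mem_filter.mp ht).2, Gker_one]
  have hR : Tendsto (fun N => ∑ t ∈ Finset.univ.filter (fun t => ¬ lam t = 1),
      (pInner π (ctr π f) (v t))^2 * Gker (lam t) N) atTop
      (nhds (∑ t ∈ Finset.univ.filter (fun t => ¬ lam t = 1),
        (pInner π (ctr π f) (v t))^2 * hval (lam t))) := by
    apply tendsto_finset_sum
    intro t ht
    have h1 : lam t ≠ 1 := (Finset.mem_filter.mp ht).2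
    have h2 : lam t < 1 := lt_of_le_of_ne ((abs_le.mp (hbd t)).2) h1
    exact (Gker_tendsto ((abs_le.mp (hbd t)).1) h2).const_mul _
  have hA0 : (∑ t ∈ Finset.univ.filter (fun t => lam t = 1),
      (pInner π (ctr π f) (v t))^2) = 0 := by
    by_contra hAne
    have hApos : 0 < ∑ t ∈ Finset.univ.filter (fun t => lam t = 1),
        (pInner π (ctr π f) (v t))^2 :=
      lt_of_le_of_ne (Finset.sum_nonneg fun t _ => sq_nonneg _) (Ne.symm hAne)
    have h1 : Tendsto (fun N : ℕ => (∑ t ∈ Finset.univ.filter (fun t => lam t = 1),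
        (pInner π (ctr π f) (v t))^2) * (N:ℝ)) atTop atTop :=
      Tendsto.const_mul_atTop hApos tendsto_natCast_atTop_atTop
    have h2 : Tendsto (fun N : ℕ => (∑ t ∈ Finset.univ.filter (fun t => lam t = 1),
        (pInner π (ctr π f) (v t))^2) * (N:ℝ)) atTop
        (nhds (w - ∑ t ∈ Finset.univ.filter (fun t => ¬ lam t = 1),
          (pInner π (ctr π f) (v t))^2 * hval (lam t))) := by
      have heq : (fun N : ℕ => (∑ t ∈ Finset.univ.filter (fun t => lam t = 1),
          (pInner π (ctr π f) (v t))^2) * (N:ℝ))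
          = fun N => varN π P f N - ∑ t ∈ Finset.univ.filter (fun t => ¬ lam t = 1),
            (pInner π (ctr π f) (v t))^2 * Gker (lam t) N := by
        funext N; rw [hsplit N]; ring
      rw [heq]; exact hw.sub hR
    exact not_tendsto_nhds_of_tendsto_atTop h1 _ h2
  have hc0 : ∀ t, lam t = 1 → pInner π (ctr π f) (v t) = 0 := by
    intro t ht
    have hmem : t ∈ Finset.univ.filter (fun t => lam t = 1) :=
      Finset.mem_filter.mpr ⟨Finset.mem_univ t, ht⟩
    have := (Finset.sum_eq_zero_iff_of_nonneg
      (fun t _ => sq_nonneg (pInner π (ctr π f) (v t)))).mp hA0 t hmem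
    exact (pow_eq_zero_iff (two_ne_zero)).mp this
  refine ⟨hc0, ?_⟩
  have hwL : w = ∑ t ∈ Finset.univ.filter (fun t => ¬ lam t = 1),
      (pInner π (ctr π f) (v t))^2 * hval (lam t) := by
    have hv2 : Tendsto (varN π P f) atTop
        (nhds (∑ t ∈ Finset.univ.filter (fun t => ¬ lam t = 1),
          (pInner π (ctr π f) (v t))^2 * hval (lam t))) := by
      have heq : varN π P f = fun N => ∑ t ∈ Finset.univ.filter (fun t => ¬ lam t = 1),
          (pInner π (ctr π f) (v t))^2 * Gker (lam t) N := by
        funext N; rw [hsplit N, hA0]; ring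
      rw [heq]; exact hR
    exact tendsto_nhds_unique hw hv2
  rw [hwL, ← Finset.sum_filter_add_sum_filter_not Finset.univ (fun t => lam t = 1)
    (fun t => (pInner π (ctr π f) (v t))^2 * hval (lam t))]
  have hz : ∑ t ∈ Finset.univ.filter (fun t => lam t = 1),
      (pInner π (ctr π f) (v t))^2 * hval (lam t) = 0 :=
    Finset.sum_eq_zero fun t ht => by rw [hc0 t (Finset.mem_filter.mp ht).2]; ring
  rw [hz, zero_add]

end Chain3





open Matrix

theorem stmt12 {n : ℕ} [NeZero n] (π : Fin n → ℝ) (P Q : Matrix (Fin n) (Fin n) ℝ)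
    (hπpos : ∀ x, 0 < π x) (hπsum : ∑ x, π x = 1)
    (hP : IsStochastic P) (hQ : IsStochastic Q)
    (hirrP : MatIrreducible P) (hirrQ : MatIrreducible Q)
    (hrevP : IsReversible π P) (hrevQ : IsReversible π Q)
    (vP vQ : Fin n → Fin n → ℝ) (lam beta : Fin n → ℝ)
    (horthoP : ∀ i j, pInner π (vP i) (vP j) = if i = j then 1 else 0)
    (horthoQ : ∀ i j, pInner π (vQ i) (vQ j) = if i = j then 1 else 0)
    (heigP : ∀ i, P.mulVec (vP i) = lam i • vP i)
    (heigQ : ∀ i, Q.mulVec (vQ i) = beta i • vQ i)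
    (hlam : Antitone lam) (hbeta : Antitone beta)
    (hlam1 : lam 0 = 1) (hbeta1 : beta 0 = 1)
    (hsep : ∀ i j : Fin n, i ≠ 0 → j ≠ 0 → lam i ≤ beta j) :
    EffDom π P Q := by
  intro f wP wQ hwP hwQ
  obtain ⟨hP0, hPw⟩ := chain_var hπpos hP horthoP heigP f hwP
  obtain ⟨hQ0, hQw⟩ := chain_var hπpos hQ horthoQ heigQ f hwQ
  have hbdP : ∀ t, |lam t| ≤ 1 := eig_abs_le hP horthoP heigP
  have hbdQ : ∀ t, |beta t| ≤ 1 := eig_abs_le hQ horthoQ heigQ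
  have hm : ∑ t, (pInner π (ctr π f) (vP t))^2 = ∑ t, (pInner π (ctr π f) (vQ t))^2 := by
    rw [parseval hπpos horthoP f, parseval hπpos horthoQ f]
  by_cases hz : ∀ t, pInner π (ctr π f) (vQ t) = 0
  · have hQ0' : wQ = 0 := by
      rw [hQw]; exact Finset.sum_eq_zero fun t _ => by rw [hz t]; ring
    have hm0 : ∑ t, (pInner π (ctr π f) (vQ t))^2 = 0 :=
      Finset.sum_eq_zero fun t _ => by rw [hz t]; ring
    have hP0' : wP = 0 := by
      rw [hPw]
      apply Finset.sum_eq_zero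
      intro t _
      have h0 : (pInner π (ctr π f) (vP t))^2 = 0 :=
        (Finset.sum_eq_zero_iff_of_nonneg (fun t _ => sq_nonneg _)).mp
          (hm.trans hm0) t (Finset.mem_univ t)
      rw [h0]; ring
    rw [hP0', hQ0']
  · push_neg at hz
    obtain ⟨j, hj⟩ := hz
    have hbj : beta j ≠ 1 := fun h => hj (hQ0 j h)
    have hjne : j ≠ 0 := fun h => hbj (by rw [h, hbeta1])
    have hn : 0 < n := Nat.pos_of_ne_zero (NeZero.ne n)
    set jmax : Fin n := ⟨n - 1, by omega⟩ with hjm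
    have hle : ∀ i : Fin n, i ≤ jmax := by
      intro i
      rw [Fin.le_def]
      have := i.isLt
      simp only [hjm]
      omega
    have hjmne : jmax ≠ 0 := by
      intro h
      exact hjne (le_antisymm (h ▸ hle j) (Fin.zero_le j))
    have hbjlt : beta j < 1 := lt_of_le_of_ne (abs_le.mp (hbdQ j)).2 hbj
    have hb1 : beta jmax < 1 := lt_of_le_of_lt (hbeta (hle j)) hbjlt
    have hbneg : -1 ≤ beta jmax := (abs_le.mp (hbdQ jmax)).1
    have h1 : wP ≤ (∑ t, (pInner π (ctr π f) (vP t))^2) * hval (beta jmax) := by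
      rw [hPw, Finset.sum_mul]
      apply Finset.sum_le_sum
      intro t _
      by_cases hct : pInner π (ctr π f) (vP t) = 0
      · rw [hct]; norm_num
      · have hlt1 : lam t ≠ 1 := fun h => hct (hP0 t h)
        have htne : t ≠ 0 := fun h => hlt1 (by rw [h, hlam1])
        exact mul_le_mul_of_nonneg_left
          (hval_mono (abs_le.mp (hbdP t)).1 (hsep t jmax htne hjmne) hb1) (sq_nonneg _)
    have h2 : (∑ t, (pInner π (ctr π f) (vQ t))^2) * hval (beta jmax) ≤ wQ := by
      rw [hQw, Finset.sum_mul]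
      apply Finset.sum_le_sum
      intro t _
      by_cases hct : pInner π (ctr π f) (vQ t) = 0
      · rw [hct]; norm_num
      · have hbt1 : beta t ≠ 1 := fun h => hct (hQ0 t h)
        have hbtlt : beta t < 1 := lt_of_le_of_ne (abs_le.mp (hbdQ t)).2 hbt1
        exact mul_le_mul_of_nonneg_left
          (hval_mono hbneg (hbeta (hle t)) hbtlt) (sq_nonneg _)
    calc wP ≤ (∑ t, (pInner π (ctr π f) (vP t))^2) * hval (beta jmax) := h1
      _ = (∑ t, (pInner π (ctr π f) (vQ t))^2) * hval (beta jmax) := by rw [hm]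
      _ ≤ wQ := h2

end Aux
end

section
/- If P is irreducible and reversible with respect to π, and all eigenvalues of P except λ_1 = 1 are non-positive, then P efficiency-dominates Π, the transition matrix of i.i.d. sampling from π defined by Π(x,y) = π(y). -/
open Matrix BigOperators Filter

section Aux

open Finset

/-- powers of entrywise-nonneg matrices are entrywise nonneg -/
lemma pow_entry_nonneg {n : ℕ} {P : Matrix (Fin n) (Fin n) ℝ} (h : ∀ x y, 0 ≤ P x y) :
    ∀ (k : ℕ) (x y : Fin n), 0 ≤ (P ^ k) x y := by
  intro k
  induction k with
  | zero =>
    intro x y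
    rw [pow_zero]
    by_cases hxy : x = y <;> simp [Matrix.one_apply, hxy]
  | succ k ih =>
    intro x y
    rw [pow_succ, Matrix.mul_apply]
    exact Finset.sum_nonneg fun z _ => mul_nonneg (ih x z) (h z y)

/-- eigenvalues of a stochastic matrix have |μ| ≤ 1 -/
lemma eig_abs_le_one {n : ℕ} {P : Matrix (Fin n) (Fin n) ℝ} (hP : IsStochastic P)
    {μ : ℝ} {v : Fin n → ℝ} (hv : v ≠ 0) (hev : P.mulVec v = μ • v) : |μ| ≤ 1 := by
  obtain ⟨y₀, hy₀⟩ := Function.ne_iff.mp hv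
  have hne : (Finset.univ : Finset (Fin n)).Nonempty := ⟨y₀, Finset.mem_univ y₀⟩
  obtain ⟨x, -, hx⟩ := Finset.exists_max_image Finset.univ (fun z => |v z|) hne
  have hvx : 0 < |v x| := lt_of_lt_of_le (abs_pos.mpr hy₀) (hx y₀ (Finset.mem_univ y₀))
  have h1 : |μ| * |v x| ≤ |v x| := by
    have h2 : (P.mulVec v) x = μ * v x := by rw [hev]; rfl
    calc |μ| * |v x| = |μ * v x| := (abs_mul μ (v x)).symm
      _ = |∑ y, P x y * v y| := by rw [← h2]; rfl
      _ ≤ ∑ y, |P x y * v y| := Finset.abs_sum_le_sum_abs _ _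
      _ ≤ ∑ y, P x y * |v x| := by
          refine Finset.sum_le_sum fun y _ => ?_
          rw [abs_mul, abs_of_nonneg (hP.1 x y)]
          exact mul_le_mul_of_nonneg_left (hx y (Finset.mem_univ y)) (hP.1 x y)
      _ = (∑ y, P x y) * |v x| := by rw [Finset.sum_mul]
      _ = |v x| := by rw [hP.2 x, one_mul]
  exact le_of_mul_le_mul_right (by linarith [h1]) hvx

/-- an eigenvector of an irreducible stochastic matrix for eigenvalue 1 is constant -/
lemma eig_one_const {n : ℕ} {P : Matrix (Fin n) (Fin n) ℝ} (hP : IsStochastic P)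
    (hirr : MatIrreducible P) {v : Fin n → ℝ} (hev : P.mulVec v = v) (x y : Fin n) :
    v x = v y := by
  -- take x₀ maximizing v
  have hne : (Finset.univ : Finset (Fin n)).Nonempty := ⟨x, Finset.mem_univ x⟩
  obtain ⟨x₀, -, hx₀⟩ := Finset.exists_max_image Finset.univ v hne
  -- one step: v z = v x₀ and P z w > 0 implies v w = v x₀
  have step : ∀ z w, v z = v x₀ → 0 < P z w → v w = v x₀ := by
    intro z w hz hzw
    have h1 : ∑ w', P z w' * v w' = v z := congrFun hev z
    have ht : ∑ w', P z w' * v x₀ = v x₀ := by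
      rw [← Finset.sum_mul, hP.2 z, one_mul]
    have h2 : ∑ w', P z w' * (v x₀ - v w') = 0 := by
      simp only [mul_sub]
      rw [Finset.sum_sub_distrib, h1, ht, hz, sub_self]
    have h3 := (Finset.sum_eq_zero_iff_of_nonneg (fun w' _ =>
      mul_nonneg (hP.1 z w') (sub_nonneg.mpr (hx₀ w' (Finset.mem_univ w'))))).mp h2
    have h4 := h3 w (Finset.mem_univ w)
    have h5 : v x₀ - v w = 0 := by
      rcases mul_eq_zero.mp h4 with h | h
      · exact absurd h (ne_of_gt hzw)
      · exact h
    linarith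
  -- chain along powers
  have chain : ∀ (k : ℕ) (z w : Fin n), v z = v x₀ → 0 < (P ^ k) z w → v w = v x₀ := by
    intro k
    induction k with
    | zero =>
      intro z w hz h
      rw [pow_zero] at h
      by_cases hzw : z = w
      · rwa [← hzw]
      · simp [Matrix.one_apply, hzw] at h
    | succ k ih =>
      intro z w hz h
      rw [pow_succ, Matrix.mul_apply] at h
      obtain ⟨u, -, hu⟩ : ∃ u ∈ Finset.univ, 0 < (P ^ k) z u * P u w := by
        by_contra hc
        push_neg at hc
        exact absurd (Finset.sum_nonpos fun u hmem => hc u hmem) (not_le.mpr h)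
      have hzu : 0 < (P ^ k) z u := by
        rcases lt_or_eq_of_le (pow_entry_nonneg hP.1 k z u) with h' | h'
        · exact h'
        · rw [← h', zero_mul] at hu; exact absurd hu (lt_irrefl 0)
      have huw : 0 < P u w := by
        rcases lt_or_eq_of_le (hP.1 u w) with h' | h'
        · exact h'
        · rw [← h', mul_zero] at hu; exact absurd hu (lt_irrefl 0)
      exact step u w (ih z u hz hzu) huw
  obtain ⟨kx, hkx⟩ := hirr x₀ x
  obtain ⟨ky, hky⟩ := hirr x₀ y
  rw [chain kx x₀ x rfl hkx, chain ky x₀ y rfl hky]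


lemma geom_sum_nonpos' {l : ℝ} (h1 : -1 ≤ l) (h2 : l ≤ 0) (N : ℕ) :
    ∑ k ∈ Finset.range N, l ^ (k + 1) ≤ 0 := by
  have hl1 : l ≠ 1 := by linarith
  have hsum : ∑ k ∈ Finset.range N, l ^ k = (l ^ N - 1) / (l - 1) := geom_sum_eq hl1 N
  have hmul : ∑ k ∈ Finset.range N, l ^ (k + 1) = l * ((l ^ N - 1) / (l - 1)) := by
    rw [← hsum, Finset.mul_sum]
    exact Finset.sum_congr rfl fun k _ => pow_succ' l k
  rw [hmul]
  have hN : l ^ N ≤ 1 := by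
    calc l ^ N ≤ |l ^ N| := le_abs_self _
      _ = |l| ^ N := abs_pow l N
      _ ≤ 1 := pow_le_one₀ (abs_nonneg l) (abs_le.mpr ⟨h1, by linarith⟩)
  have hquot : 0 ≤ (l ^ N - 1) / (l - 1) := by
    rw [← neg_div_neg_eq]
    apply div_nonneg <;> linarith
  exact mul_nonpos_of_nonpos_of_nonneg h2 hquot

lemma grid_sum_le' {l : ℝ} (h1 : -1 ≤ l) (h2 : l ≤ 0) (N : ℕ) :
    ∑ i ∈ Finset.range N, ∑ j ∈ Finset.range N, l ^ (max i j - min i j) ≤ N := by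
  induction N with
  | zero => simp
  | succ N ih =>
    rw [Finset.sum_range_succ]
    have hA : ∀ i ∈ Finset.range N, (∑ j ∈ Finset.range (N + 1), l ^ (max i j - min i j))
        = (∑ j ∈ Finset.range N, l ^ (max i j - min i j)) + l ^ (N - i) := by
      intro i hi
      rw [Finset.sum_range_succ]
      congr 2
      have hi' := Finset.mem_range.mp hi
      omega
    rw [Finset.sum_congr rfl hA, Finset.sum_add_distrib]
    have hlast : ∑ j ∈ Finset.range (N + 1), l ^ (max N j - min N j)
        = (∑ j ∈ Finset.range N, l ^ (N - j)) + 1 := by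
      rw [Finset.sum_range_succ]
      congr 1
      · refine Finset.sum_congr rfl fun j hj => ?_
        have hj' := Finset.mem_range.mp hj
        congr 1
        omega
      · simp
    rw [hlast]
    have hrefl : ∑ i ∈ Finset.range N, l ^ (N - i) = ∑ k ∈ Finset.range N, l ^ (k + 1) := by
      rw [← Finset.sum_range_reflect (fun j => l ^ (j + 1)) N]
      refine Finset.sum_congr rfl fun j hj => ?_
      have hj' := Finset.mem_range.mp hj
      congr 1
      omega
    rw [hrefl]
    have hg := geom_sum_nonpos' h1 h2 N
    push_cast
    linarith

end Aux

theorem stmt13 {n : ℕ} (π : Fin n → ℝ) (P : Matrix (Fin n) (Fin n) ℝ)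
    (hπpos : ∀ x, 0 < π x) (hπsum : ∑ x, π x = 1)
    (hP : IsStochastic P) (hirr : MatIrreducible P) (hrev : IsReversible π P)
    (heig : ∀ (μ : ℝ) (v : Fin n → ℝ), v ≠ 0 → P.mulVec v = μ • v →
      μ = 1 ∨ μ ≤ 0) :
    EffDom π P (Matrix.of fun _ y : Fin n => π y) := by
  intro f vP vQ hvP hvQ
  classical
  set m := ∑ z, π z * f z with hm
  have hzero : ∑ x, π x * (f x - m) = 0 := by
    simp only [mul_sub]
    rw [Finset.sum_sub_distrib, ← Finset.sum_mul, hπsum, one_mul, ← hm, sub_self]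
  have hsq : ∀ x, Real.sqrt (π x) * Real.sqrt (π x) = π x :=
    fun x => Real.mul_self_sqrt (hπpos x).le
  have hsqpos : ∀ x, 0 < Real.sqrt (π x) := fun x => Real.sqrt_pos.mpr (hπpos x)
  set D := Matrix.diagonal (fun x => Real.sqrt (π x)) with hD
  set E := Matrix.diagonal (fun x => (Real.sqrt (π x))⁻¹) with hE2
  have hED : E * D = 1 := by
    rw [hE2, hD, Matrix.diagonal_mul_diagonal,
      show (fun x => (Real.sqrt (π x))⁻¹ * Real.sqrt (π x)) = fun _ : Fin n => (1:ℝ) from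
        funext fun x => inv_mul_cancel₀ (ne_of_gt (hsqpos x)), Matrix.diagonal_one]
  have hDE : D * E = 1 := by
    rw [hE2, hD, Matrix.diagonal_mul_diagonal,
      show (fun x => Real.sqrt (π x) * (Real.sqrt (π x))⁻¹) = fun _ : Fin n => (1:ℝ) from
        funext fun x => mul_inv_cancel₀ (ne_of_gt (hsqpos x)), Matrix.diagonal_one]
  set S := D * P * E with hS
  have hSpow : ∀ k : ℕ, S ^ k = D * (P ^ k) * E := by
    intro k
    induction k with
    | zero => rw [pow_zero, pow_zero, Matrix.mul_one, hDE]
    | succ k ih =>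
      rw [pow_succ, pow_succ, ih, hS]
      have h1 : E * (D * P * E) = P * E := by
        rw [← Matrix.mul_assoc, ← Matrix.mul_assoc, hED, Matrix.one_mul]
      rw [Matrix.mul_assoc (D * (P ^ k)) E (D * P * E), h1, ← Matrix.mul_assoc,
        Matrix.mul_assoc D (P ^ k) P]
  have hSentry : ∀ (k : ℕ) (x y : Fin n),
      (S ^ k) x y = Real.sqrt (π x) * (P ^ k) x y * (Real.sqrt (π y))⁻¹ := by
    intro k x y
    rw [hSpow k, hD, hE2, Matrix.mul_diagonal, Matrix.diagonal_mul]
  have hSherm : S.IsHermitian := by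
    rw [Matrix.IsHermitian]
    ext i j
    rw [Matrix.conjTranspose_apply, star_trivial]
    have e1 : S j i = Real.sqrt (π j) * P j i * (Real.sqrt (π i))⁻¹ := by
      have := hSentry 1 j i
      rwa [pow_one, pow_one] at this
    have e2 : S i j = Real.sqrt (π i) * P i j * (Real.sqrt (π j))⁻¹ := by
      have := hSentry 1 i j
      rwa [pow_one, pow_one] at this
    rw [e1, e2]
    have hi := ne_of_gt (hsqpos i)
    have hj := ne_of_gt (hsqpos j)
    field_simp
    linear_combination P j i * hsq j - P i j * hsq i - hrev i j
  obtain ⟨φ, hφ⟩ : ∃ φ : EuclideanSpace ℝ (Fin n), ∀ x, φ x = Real.sqrt (π x) * (f x - m) :=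
    ⟨WithLp.toLp 2 (fun x => Real.sqrt (π x) * (f x - m)), fun _ => rfl⟩
  have hgamma : ∀ k : ℕ, autocov π P f k = φ ⬝ᵥ ((S ^ k) *ᵥ φ) := by
    intro k
    unfold autocov
    rw [← hm]
    show _ = ∑ x, φ x * ∑ y, (S ^ k) x y * φ y
    refine Finset.sum_congr rfl fun x _ => ?_
    rw [Finset.mul_sum]
    refine Finset.sum_congr rfl fun y _ => ?_
    rw [hSentry k x y, hφ x, hφ y, ← hsq x]
    have hy := ne_of_gt (hsqpos y)
    field_simp
    rw [Real.sqrt_sq (hsqpos x).le]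
    ring
  set u := hSherm.eigenvectorBasis with hu
  set lam := hSherm.eigenvalues with hlam
  have hmvu : ∀ i, S *ᵥ (u i) = lam i • (u i) := by
    rw [hu, hlam]
    exact hSherm.mulVec_eigenvectorBasis
  have hSym : ∀ (k : ℕ) (v w : Fin n → ℝ), v ⬝ᵥ ((S ^ k) *ᵥ w) = ((S ^ k) *ᵥ v) ⬝ᵥ w := by
    intro k v w
    rw [Matrix.dotProduct_mulVec, ← Matrix.mulVec_transpose]
    congr 1
    rw [← Matrix.conjTranspose_eq_transpose_of_trivial, (hSherm.pow k).eq]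
  have hSk_u : ∀ (k : ℕ) (i : Fin n), (S ^ k) *ᵥ (u i) = (lam i ^ k) • (u i) := by
    intro k i
    induction k with
    | zero => rw [pow_zero, Matrix.one_mulVec, pow_zero, one_smul]
    | succ k ih =>
      rw [pow_succ', ← Matrix.mulVec_mulVec, ih, Matrix.mulVec_smul, hmvu i, smul_smul,
        ← pow_succ]
  obtain ⟨c, hc⟩ : ∃ c : Fin n → ℝ, ∀ i, c i = (u i) ⬝ᵥ φ := ⟨_, fun _ => rfl⟩
  have hgamma2 : ∀ k : ℕ, φ ⬝ᵥ ((S ^ k) *ᵥ φ) = ∑ i, c i ^ 2 * lam i ^ k := by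
    intro k
    have h1 : (φ ⬝ᵥ ((S ^ k) *ᵥ φ)) =
        (inner ℝ φ (WithLp.toLp 2 ((S ^ k) *ᵥ φ : Fin n → ℝ) : EuclideanSpace ℝ (Fin n)) : ℝ) := by rw [real_inner_comm]; rfl
    rw [h1, ← u.sum_inner_mul_inner φ (WithLp.toLp 2 ((S ^ k) *ᵥ φ : Fin n → ℝ) : EuclideanSpace ℝ (Fin n))]
    refine Finset.sum_congr rfl fun i _ => ?_
    have h2 : (inner ℝ (u i) (WithLp.toLp 2 ((S ^ k) *ᵥ φ : Fin n → ℝ) : EuclideanSpace ℝ (Fin n)) : ℝ)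
        = lam i ^ k * c i := by
      rw [real_inner_comm]
      show (u i) ⬝ᵥ ((S ^ k) *ᵥ φ) = _
      rw [hSym k, hSk_u k i, smul_dotProduct, ← hc i]
      rfl
    have h3 : (inner ℝ φ (u i) : ℝ) = c i := by
      exact (hc i).symm
    rw [h2, h3]
    ring
  have hgam : ∀ k, autocov π P f k = ∑ i, c i ^ 2 * lam i ^ k :=
    fun k => (hgamma k).trans (hgamma2 k)
  -- eigenvalue analysis
  have heig' : ∀ i, (c i = 0) ∨ (-1 ≤ lam i ∧ lam i ≤ 0) := by
    intro i
    obtain ⟨v, hv⟩ : ∃ v : Fin n → ℝ, v = E *ᵥ (u i) := ⟨_, rfl⟩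
    have hvx : ∀ x, v x = (Real.sqrt (π x))⁻¹ * (u i) x := by
      intro x
      rw [hv, hE2]
      show ∑ y, Matrix.diagonal (fun z => (Real.sqrt (π z))⁻¹) x y * (u i) y = _
      rw [Finset.sum_eq_single x]
      · rw [Matrix.diagonal_apply_eq]
      · intro y _ hyx
        rw [Matrix.diagonal_apply_ne' _ hyx, zero_mul]
      · intro h
        exact absurd (Finset.mem_univ x) h
    have hone : (u i) ⬝ᵥ (u i) = 1 := by
      have h := orthonormal_iff_ite.mp u.orthonormal i i
      simp only [if_pos rfl] at h
      exact h
    have hv_ne : v ≠ 0 := by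
      intro h0
      have huz : ∀ x, (u i) x = 0 := by
        intro x
        have h1 : v x = 0 := by rw [h0]; rfl
        rw [hvx x] at h1
        rcases mul_eq_zero.mp h1 with h | h
        · exact absurd h (inv_ne_zero (ne_of_gt (hsqpos x)))
        · exact h
      have : (u i) ⬝ᵥ (u i) = 0 := by
        unfold dotProduct
        simp [huz]
      rw [hone] at this
      norm_num at this
    have hDv : D *ᵥ v = u i := by
      rw [hv, Matrix.mulVec_mulVec, hDE, Matrix.one_mulVec]
    have h2 : D *ᵥ (P *ᵥ v) = lam i • (u i) := by
      calc D *ᵥ (P *ᵥ v) = D *ᵥ (P *ᵥ (E *ᵥ u i)) := by rw [← hv]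
        _ = (D * P * E) *ᵥ u i := by rw [Matrix.mulVec_mulVec, Matrix.mulVec_mulVec]
        _ = lam i • u i := by rw [← hS]; exact hmvu i
    have hPv : P *ᵥ v = lam i • v := by
      have h3 : E *ᵥ (D *ᵥ (P *ᵥ v)) = E *ᵥ (lam i • (u i)) := by rw [h2]
      rwa [Matrix.mulVec_mulVec, hED, Matrix.one_mulVec, Matrix.mulVec_smul, ← hDv,
        Matrix.mulVec_mulVec, hED, Matrix.one_mulVec] at h3
    rcases heig (lam i) v hv_ne hPv with h1 | h1
    · left
      have hconst : ∀ x y, v x = v y := by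
        apply eig_one_const hP hirr
        rw [hPv, h1, one_smul]
      have hux : ∀ x, (u i) x = Real.sqrt (π x) * v x := by
        intro x
        rw [hvx x, ← mul_assoc, mul_inv_cancel₀ (ne_of_gt (hsqpos x)), one_mul]
      rw [hc i]
      calc (u i) ⬝ᵥ φ = ∑ x, v i * (π x * (f x - m)) := by
            refine Finset.sum_congr rfl fun x _ => ?_
            rw [hux x, hφ x, hconst x i]
            linear_combination (v i * (f x - m)) * hsq x
        _ = v i * ∑ x, π x * (f x - m) := by rw [Finset.mul_sum]
        _ = 0 := by rw [hzero, mul_zero]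
    · right
      refine ⟨?_, h1⟩
      have habs := eig_abs_le_one hP hv_ne hPv
      exact (abs_le.mp habs).1
  -- the variance bound for P
  have hvarP : ∀ N : ℕ, 1 ≤ N → varN π P f N ≤ ∑ i, c i ^ 2 := by
    intro N hN
    have hNpos : (0:ℝ) < N := by exact_mod_cast hN
    unfold varN
    have hsum : ∑ i ∈ Finset.range N, ∑ j ∈ Finset.range N, autocov π P f (max i j - min i j)
        = ∑ q, c q ^ 2 * (∑ i ∈ Finset.range N, ∑ j ∈ Finset.range N,
            (lam q) ^ (max i j - min i j)) := by
      calc ∑ i ∈ Finset.range N, ∑ j ∈ Finset.range N, autocov π P f (max i j - min i j)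
          = ∑ i ∈ Finset.range N, ∑ j ∈ Finset.range N, ∑ q,
              c q ^ 2 * lam q ^ (max i j - min i j) :=
            Finset.sum_congr rfl fun i _ => Finset.sum_congr rfl fun j _ => hgam _
        _ = ∑ i ∈ Finset.range N, ∑ q, ∑ j ∈ Finset.range N,
              c q ^ 2 * lam q ^ (max i j - min i j) :=
            Finset.sum_congr rfl fun i _ => Finset.sum_comm
        _ = ∑ q, ∑ i ∈ Finset.range N, ∑ j ∈ Finset.range N,
              c q ^ 2 * lam q ^ (max i j - min i j) := Finset.sum_comm
        _ = ∑ q, c q ^ 2 * (∑ i ∈ Finset.range N, ∑ j ∈ Finset.range N,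
              (lam q) ^ (max i j - min i j)) := by
            refine Finset.sum_congr rfl fun q _ => ?_
            rw [Finset.mul_sum]
            exact Finset.sum_congr rfl fun i _ => (Finset.mul_sum _ _ _).symm
    rw [hsum]
    have hbound : ∀ q, c q ^ 2 * (∑ i ∈ Finset.range N, ∑ j ∈ Finset.range N,
        lam q ^ (max i j - min i j)) ≤ c q ^ 2 * N := by
      intro q
      rcases heig' q with h1 | ⟨h1, h2⟩
      · rw [h1]
        norm_num
      · exact mul_le_mul_of_nonneg_left (grid_sum_le' h1 h2 N) (sq_nonneg (c q))
    calc (N:ℝ)⁻¹ * ∑ q, c q ^ 2 * (∑ i ∈ Finset.range N, ∑ j ∈ Finset.range N,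
          (lam q) ^ (max i j - min i j))
        ≤ (N:ℝ)⁻¹ * ∑ q, c q ^ 2 * N := by
          apply mul_le_mul_of_nonneg_left (Finset.sum_le_sum fun q _ => hbound q)
          exact inv_nonneg.mpr hNpos.le
      _ = ∑ q, c q ^ 2 := by
          rw [← Finset.sum_mul]
          field_simp
  -- the Π chain
  set Q : Matrix (Fin n) (Fin n) ℝ := Matrix.of (fun _ y : Fin n => π y) with hQ
  have hQpow : ∀ k : ℕ, 1 ≤ k → ∀ x y, (Q ^ k) x y = π y := by
    intro k
    induction k with
    | zero => omega
    | succ k ih =>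
      intro _ x y
      by_cases hk0 : k = 0
      · subst hk0
        rw [pow_one, hQ]
        rfl
      · have hk1 : 1 ≤ k := by omega
        rw [pow_succ, Matrix.mul_apply]
        calc ∑ z, (Q ^ k) x z * Q z y = ∑ z, π z * π y := by
              refine Finset.sum_congr rfl fun z _ => ?_
              rw [ih hk1 x z, hQ]
              rfl
          _ = π y := by rw [← Finset.sum_mul, hπsum, one_mul]
  have hac0 : autocov π Q f 0 = autocov π P f 0 := by
    unfold autocov
    rw [pow_zero, pow_zero]
  have hacpos : ∀ k, 1 ≤ k → autocov π Q f k = 0 := by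
    intro k hk
    unfold autocov
    rw [← hm]
    calc ∑ x, ∑ y, π x * (f x - m) * (Q ^ k) x y * (f y - m)
        = ∑ x, (π x * (f x - m)) * ∑ y, π y * (f y - m) := by
          refine Finset.sum_congr rfl fun x _ => ?_
          rw [Finset.mul_sum]
          refine Finset.sum_congr rfl fun y _ => ?_
          rw [hQpow k hk x y]
          ring
      _ = 0 := by
          rw [hzero]
          simp
  have hvarQ : ∀ N : ℕ, 1 ≤ N → varN π Q f N = autocov π P f 0 := by
    intro N hN
    have hNne : (N:ℝ) ≠ 0 := by
      have : (0:ℝ) < N := by exact_mod_cast hN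
      exact ne_of_gt this
    unfold varN
    have hin : ∀ i ∈ Finset.range N,
        ∑ j ∈ Finset.range N, autocov π Q f (max i j - min i j) = autocov π Q f 0 := by
      intro i hi
      rw [Finset.sum_eq_single i]
      · congr 1
        omega
      · intro j _ hne
        have h1 : 1 ≤ max i j - min i j := by omega
        exact hacpos _ h1
      · intro h
        exact absurd hi h
    rw [Finset.sum_congr rfl hin, Finset.sum_const, Finset.card_range, hac0, nsmul_eq_mul]
    rw [← mul_assoc, inv_mul_cancel₀ hNne, one_mul]
  have hsig : autocov π P f 0 = ∑ i, c i ^ 2 := by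
    rw [hgam 0]
    refine Finset.sum_congr rfl fun i _ => ?_
    rw [pow_zero, mul_one]
  have hQconst : Tendsto (varN π Q f) atTop (nhds (∑ i, c i ^ 2)) := by
    have hevent : (fun _ : ℕ => (∑ i, c i ^ 2)) =ᶠ[atTop] varN π Q f := by
      filter_upwards [eventually_ge_atTop 1] with N hN
      rw [hvarQ N hN, hsig]
    exact Tendsto.congr' hevent tendsto_const_nhds
  have hvQeq : vQ = ∑ i, c i ^ 2 := tendsto_nhds_unique hvQ hQconst
  rw [hvQeq]
  refine le_of_tendsto hvP ?_
  filter_upwards [eventually_ge_atTop 1] with N hN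
  exact hvarP N hN
end
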